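/- Let k be a field and R ⊆ k[x,y] the k-subalgebra generated by the monomials x·y^m for all m ≥ 0. Then the finite generation ideal f_R of R equals m₀ := x·k[x,y], and moreover m₀ is the radical of the principal ideal x·R of R. In particular, for a nonzero f ∈ R, the localization R_f is a finitely generated k-algebra if and only if x divides f in k[x,y]. -/

import Mathlib

open MvPolynomial

/-- The subalgebra `R = k[x, xy, xy², …] ⊆ k[x,y]` generated by the monomials `x·yᵐ`. -/
noncomputable def Rxy (k : Type*) [Field k] : Subalgebra k (MvPolynomial (Fin 2) k) :=
  Algebra.adjoin k {p | ∃ m : ℕ, p = X 0 * X 1 ^ m}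

section Aux
open TrivSqZeroExt

set_option maxHeartbeats 1600000
set_option synthInstance.maxHeartbeats 1000000

variable {k : Type*} [Field k]

theorem primeX0' (k : Type*) [Field k] : Prime (X 0 : MvPolynomial (Fin 2) k) := by
  have h : Prime ((finSuccEquiv k 1).toMulEquiv (X 0 : MvPolynomial (Fin 2) k)) := by
    show Prime ((finSuccEquiv k 1) (X 0))
    rw [finSuccEquiv_X_zero]; exact Polynomial.prime_X
  exact (MulEquiv.prime_iff (finSuccEquiv k 1).toMulEquiv).mp h

lemma mem_gen' (m : ℕ) : (X 0 * X 1 ^ m : MvPolynomial (Fin 2) k) ∈ Rxy k :=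
  Algebra.subset_adjoin ⟨m, rfl⟩

lemma X0_mul_mem' (q : MvPolynomial (Fin 2) k) : X 0 * q ∈ Rxy k := by
  induction q using MvPolynomial.induction_on' with
  | monomial d a =>
    have key : X 0 * monomial d a
        = C a * ((X 0 * X 1 ^ (d 1)) * (X 0 * X 1 ^ 0) ^ (d 0)) := by
      rw [monomial_eq, Finsupp.prod_fintype _ _ (fun i => pow_zero _)]
      rw [Fin.prod_univ_two]
      ring
    rw [key, ← smul_eq_C_mul]
    exact (Rxy k).smul_mem (mul_mem (mem_gen' _) (pow_mem (mem_gen' 0) _)) a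
  | add p q hp hq => rw [mul_add]; exact add_mem hp hq

lemma mem_Rxy_iff' {p : MvPolynomial (Fin 2) k} :
    p ∈ Rxy k ↔ ∃ (c : k) (q : MvPolynomial (Fin 2) k), p = C c + X 0 * q := by
  constructor
  · intro hp
    induction hp using Algebra.adjoin_induction with
    | mem z hz => obtain ⟨m, rfl⟩ := hz; exact ⟨0, X 1 ^ m, by simp⟩
    | algebraMap r => exact ⟨r, 0, by simp [algebraMap_eq]⟩
    | add a b _ _ ha hb =>
      obtain ⟨c1, q1, rfl⟩ := ha; obtain ⟨c2, q2, rfl⟩ := hb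
      exact ⟨c1 + c2, q1 + q2, by push_cast [map_add]; ring⟩
    | mul a b _ _ ha hb =>
      obtain ⟨c1, q1, rfl⟩ := ha; obtain ⟨c2, q2, rfl⟩ := hb
      exact ⟨c1 * c2, C c1 * q2 + C c2 * q1 + X 0 * (q1 * q2), by push_cast [map_mul]; ring⟩
  · rintro ⟨c, q, rfl⟩
    exact add_mem ((Rxy k).algebraMap_mem c) (X0_mul_mem' q)

lemma radical_eq (x : Rxy k) (hx : (x : MvPolynomial (Fin 2) k) = X 0) :
    (Ideal.span {x}).radical =
      Ideal.comap (Rxy k).val.toRingHom (Ideal.span {X 0}) := by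
  have hprime : (Ideal.span {(X 0 : MvPolynomial (Fin 2) k)}).IsPrime :=
    (Ideal.span_singleton_prime (X_ne_zero 0)).mpr (primeX0' k)
  apply le_antisymm
  · refine (Ideal.IsPrime.comap _ (hK := hprime)).isRadical.radical_le_iff.mpr ?_
    rw [Ideal.span_le, Set.singleton_subset_iff]
    show (x : MvPolynomial (Fin 2) k) ∈ Ideal.span {(X 0 : MvPolynomial (Fin 2) k)}
    rw [hx]
    exact Ideal.mem_span_singleton_self _
  · intro h hh
    have : (X 0 : MvPolynomial (Fin 2) k) ∣ (h : MvPolynomial (Fin 2) k) := by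
      rw [Ideal.mem_comap] at hh
      exact (Ideal.mem_span_singleton).mp hh
    obtain ⟨p, hp⟩ := this
    refine ⟨2, ?_⟩
    rw [Ideal.mem_span_singleton]
    refine ⟨⟨X 0 * (p * p), X0_mul_mem' (p * p)⟩, ?_⟩
    apply Subtype.ext
    push_cast
    rw [hx, hp]
    ring

lemma ft_of_dvd (f : Rxy k) (hdvd : X 0 ∣ (f : MvPolynomial (Fin 2) k)) :
    Algebra.FiniteType k (Localization.Away f) := by
  obtain ⟨g, hg⟩ := hdvd
  set L := Localization.Away f with hL
  let u : L := IsLocalization.Away.invSelf f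
  have hfu : algebraMap (Rxy k) L f * u = 1 := IsLocalization.Away.mul_invSelf f
  let xR : Rxy k := ⟨X 0, by simpa using mem_gen' (k := k) 0⟩
  let yR : Rxy k := ⟨X 0 * (g * X 1), X0_mul_mem' (k := k) (g * X 1)⟩
  let x' : L := algebraMap (Rxy k) L xR
  let y' : L := algebraMap (Rxy k) L yR * u
  have key : ∀ (p : MvPolynomial (Fin 2) k) (hp : p ∈ Rxy k),
      algebraMap (Rxy k) L ⟨p, hp⟩ ∈ Algebra.adjoin k (Set.range ![x', y', u]) := by
    intro p hp
    induction hp using Algebra.adjoin_induction with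
    | mem z hz =>
      obtain ⟨m, rfl⟩ := hz
      have e1 : (⟨X 0 * X 1 ^ m, mem_gen' (k := k) m⟩ : Rxy k) * f ^ m = xR * yR ^ m := by
        apply Subtype.ext
        push_cast
        rw [hg]
        ring
      have e2 : x' * y' ^ m = algebraMap (Rxy k) L ⟨X 0 * X 1 ^ m, mem_gen' (k := k) m⟩ := by
        have := congrArg (algebraMap (Rxy k) L) e1
        rw [map_mul, map_mul, map_pow, map_pow] at this
        calc x' * y' ^ m
            = algebraMap (Rxy k) L xR * (algebraMap (Rxy k) L yR) ^ m * u ^ m := by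
              simp only [y', mul_pow]; ring
          _ = algebraMap (Rxy k) L ⟨X 0 * X 1 ^ m, mem_gen' (k := k) m⟩
              * (algebraMap (Rxy k) L f * u) ^ m := by rw [← this]; rw [mul_pow]; ring
          _ = _ := by rw [hfu, one_pow, mul_one]
      have hpm : (⟨X 0 * X 1 ^ m, _⟩ : Rxy k) = ⟨X 0 * X 1 ^ m, mem_gen' (k := k) m⟩ := rfl
      have hx'mem : x' ∈ Set.range ![x', y', u] := ⟨0, rfl⟩
      have hy'mem : y' ∈ Set.range ![x', y', u] := ⟨1, rfl⟩
      rw [hpm, ← e2]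
      exact mul_mem (Algebra.subset_adjoin hx'mem)
        (pow_mem (Algebra.subset_adjoin hy'mem) m)
    | algebraMap r =>
      have : (⟨algebraMap k (MvPolynomial (Fin 2) k) r, _⟩ : Rxy k)
          = algebraMap k (Rxy k) r := rfl
      rw [this, ← IsScalarTower.algebraMap_apply]
      exact Subalgebra.algebraMap_mem _ r
    | add a b ha hb iha ihb =>
      have : (⟨a + b, _⟩ : Rxy k) = ⟨a, ha⟩ + ⟨b, hb⟩ := rfl
      rw [this, map_add]
      exact add_mem iha ihb
    | mul a b ha hb iha ihb =>
      have : (⟨a * b, _⟩ : Rxy k) = ⟨a, ha⟩ * ⟨b, hb⟩ := rfl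
      rw [this, map_mul]
      exact mul_mem iha ihb
  have htop : Algebra.adjoin k (Set.range ![x', y', u]) = ⊤ := by
    rw [eq_top_iff]
    rintro z -
    obtain ⟨⟨a, s⟩, hz⟩ := IsLocalization.surj (Submonoid.powers f) z
    obtain ⟨n, hn⟩ := s.2
    have hz' : z = algebraMap (Rxy k) L a * u ^ n := by
      have hn' : f ^ n = (s : Rxy k) := hn
      have h1 : z * (algebraMap (Rxy k) L f) ^ n = algebraMap (Rxy k) L a := by
        rw [← map_pow, hn']; exact hz
      calc z = z * ((algebraMap (Rxy k) L f) * u) ^ n := by rw [hfu, one_pow, mul_one]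
        _ = z * (algebraMap (Rxy k) L f) ^ n * u ^ n := by rw [mul_pow]; ring
        _ = algebraMap (Rxy k) L a * u ^ n := by rw [h1]
    have humem : u ∈ Set.range ![x', y', u] := ⟨2, rfl⟩
    rw [hz']
    exact mul_mem (key a.1 a.2) (pow_mem (Algebra.subset_adjoin humem) n)
  have hrange : (MvPolynomial.aeval (R := k) ![x', y', u]).range = ⊤ := by
    rw [← Algebra.adjoin_range_eq_range_aeval, htop]
  have hsurj : Function.Surjective (MvPolynomial.aeval (R := k) ![x', y', u]) := by
    intro z
    have hmem : z ∈ (MvPolynomial.aeval (R := k) ![x', y', u]).range := hrange ▸ Algebra.mem_top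
    obtain ⟨w, hw⟩ := hmem
    exact ⟨w, hw⟩
  haveI : Algebra.FiniteType k (MvPolynomial (Fin 3) k) := inferInstance
  exact Algebra.FiniteType.of_surjective
    (MvPolynomial.aeval (R := k) ![x', y', u]) hsurj

lemma dvd_of_ft (f : Rxy k) (c : k) (g : MvPolynomial (Fin 2) k)
    (hf : (f : MvPolynomial (Fin 2) k) = C c + X 0 * g) (hc : c ≠ 0)
    (hFT : Algebra.FiniteType k (Localization.Away f)) : False := by
  classical
  set L := Localization.Away f with hL
  set D := DualNumber (Polynomial k) with hD
  let ev : MvPolynomial (Fin 2) k →ₐ[k] D :=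
    aeval ![(DualNumber.eps : D), inl Polynomial.X]
  let ψ₀ : Rxy k →ₐ[k] D := ev.comp (Rxy k).val
  have hfst_eval : ∀ (a : k) (q : MvPolynomial (Fin 2) k),
      (ev (C a + X 0 * q)).fst = Polynomial.C a := by
    intro a q
    rw [map_add, map_mul, aeval_X, Matrix.cons_val_zero, aeval_C]
    rw [fst_add, fst_mul, DualNumber.fst_eps, zero_mul, add_zero, algebraMap_eq_inl', fst_inl,
      Polynomial.algebraMap_eq]
  have hfst0 : ∀ r : Rxy k, ∃ a : k, (ψ₀ r).fst = Polynomial.C a := by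
    intro r
    obtain ⟨a, q, hq⟩ := mem_Rxy_iff'.mp r.2
    refine ⟨a, ?_⟩
    show (ev (r : MvPolynomial (Fin 2) k)).fst = _
    rw [hq]; exact hfst_eval a q
  have hfstf : (ψ₀ f).fst = Polynomial.C c := by
    show (ev (f : MvPolynomial (Fin 2) k)).fst = _
    rw [hf]; exact hfst_eval c g
  have hunitf : IsUnit (ψ₀ f) := by
    rw [isUnit_iff_isUnit_fst, hfstf, Polynomial.isUnit_C]
    exact hc.isUnit
  have hunits : ∀ y : Submonoid.powers f, IsUnit (ψ₀ (y : Rxy k)) := by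
    rintro ⟨y, n, rfl⟩
    rw [map_pow]
    exact hunitf.pow n
  let ψ : L →ₐ[k] D := IsLocalization.liftAlgHom (M := Submonoid.powers f) hunits
  have hψ : ∀ r : Rxy k, ψ (algebraMap (Rxy k) L r) = ψ₀ r := fun r => by
    simp only [ψ, IsLocalization.liftAlgHom_apply]
    exact IsLocalization.lift_eq hunits r
  have hfst : ∀ z : L, ∃ a : k, (ψ z).fst = Polynomial.C a := by
    intro z
    obtain ⟨⟨a, s⟩, hz⟩ := IsLocalization.surj (Submonoid.powers f) z
    obtain ⟨n, hn⟩ := s.2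
    have hn' : f ^ n = (s : Rxy k) := hn
    have h1 : ψ z * (ψ₀ f) ^ n = ψ₀ a := by
      have := congrArg ψ hz
      rw [map_mul, hψ, hψ] at this
      rwa [← hn', map_pow] at this
    obtain ⟨a0, ha0⟩ := hfst0 a
    have h2 : (ψ z).fst * Polynomial.C (c ^ n) = Polynomial.C a0 := by
      have h3 := congrArg TrivSqZeroExt.fst h1
      rw [fst_mul, fst_pow, hfstf, ha0] at h3
      rw [map_pow]; exact h3
    refine ⟨a0 * (c ^ n)⁻¹, ?_⟩
    have hcn : (Polynomial.C (c ^ n) : Polynomial k) * Polynomial.C ((c ^ n)⁻¹) = 1 := by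
      rw [← Polynomial.C_mul, mul_inv_cancel₀ (pow_ne_zero n hc), Polynomial.C_1]
    calc (ψ z).fst = (ψ z).fst * (Polynomial.C (c ^ n) * Polynomial.C ((c ^ n)⁻¹)) := by
          rw [hcn, mul_one]
      _ = Polynomial.C a0 * Polynomial.C ((c ^ n)⁻¹) := by rw [← mul_assoc, h2]
      _ = _ := by rw [← Polynomial.C_mul]
  obtain ⟨T, hT⟩ := hFT.out
  let W : Submodule k (Polynomial k) :=
    Submodule.span k (TrivSqZeroExt.snd '' (⇑ψ '' (T : Set L)))
  have hWfd : FiniteDimensional k W :=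
    FiniteDimensional.span_of_finite k ((T.finite_toSet.image _).image _)
  have hinl : ∀ a : k, (algebraMap k D a) = inl (Polynomial.C a) := fun a => by
    rw [algebraMap_eq_inl', Polynomial.algebraMap_eq]
  let B : Subalgebra k D :=
    { carrier := {d : D | (∃ a : k, d.fst = Polynomial.C a) ∧ d.snd ∈ W}
      mul_mem' := by
        rintro d e ⟨⟨a, ha⟩, hd⟩ ⟨⟨b, hb⟩, he⟩
        refine ⟨⟨a * b, by rw [fst_mul, ha, hb, Polynomial.C_mul]⟩, ?_⟩
        rw [snd_mul, ha, hb]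
        have h1 : (Polynomial.C a) • e.snd = a • e.snd := by
          rw [smul_eq_mul, ← Polynomial.smul_eq_C_mul]
        have h2 : (MulOpposite.op (Polynomial.C b)) • d.snd = b • d.snd := by
          show d.snd * Polynomial.C b = _
          rw [mul_comm, ← Polynomial.smul_eq_C_mul]
        rw [h1, h2]
        exact Submodule.add_mem _ (W.smul_mem a he) (W.smul_mem b hd)
      one_mem' := ⟨⟨1, by rw [fst_one, Polynomial.C_1]⟩,
        by rw [snd_one]; exact Submodule.zero_mem _⟩
      add_mem' := by
        rintro d e ⟨⟨a, ha⟩, hd⟩ ⟨⟨b, hb⟩, he⟩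
        exact ⟨⟨a + b, by rw [fst_add, ha, hb, Polynomial.C_add]⟩,
          by rw [snd_add]; exact Submodule.add_mem _ hd he⟩
      zero_mem' := ⟨⟨0, by rw [fst_zero, Polynomial.C_0]⟩,
        by rw [snd_zero]; exact Submodule.zero_mem _⟩
      algebraMap_mem' := fun a => ⟨⟨a, by rw [hinl, fst_inl]⟩,
        by rw [hinl, snd_inl]; exact Submodule.zero_mem _⟩ }
  have hTB : (⇑ψ '' (T : Set L)) ⊆ (B : Set D) := by
    rintro d ⟨t, ht, rfl⟩
    exact ⟨hfst t, Submodule.subset_span ⟨ψ t, ⟨t, ht, rfl⟩, rfl⟩⟩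
  have hranB : ∀ z : L, ψ z ∈ B := by
    intro z
    have hz : z ∈ Algebra.adjoin k (T : Set L) := hT ▸ Algebra.mem_top
    have h1 : ψ z ∈ (Algebra.adjoin k (T : Set L)).map ψ :=
      Subalgebra.mem_map.mpr ⟨z, hz, rfl⟩
    rw [AlgHom.map_adjoin] at h1
    exact Algebra.adjoin_le hTB h1
  have hinlpow : ∀ m : ℕ, (inl Polynomial.X : D) ^ m = inl (Polynomial.X ^ m) := by
    intro m
    induction m with
    | zero => simp
    | succ i ih => rw [pow_succ, pow_succ, ih, inl_mul]
  have hXm : ∀ m : ℕ, (Polynomial.X : Polynomial k) ^ m ∈ W := by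
    intro m
    have h1 := hranB (algebraMap (Rxy k) L ⟨X 0 * X 1 ^ m, mem_gen' (k := k) m⟩)
    rw [hψ] at h1
    have h2 : (ψ₀ ⟨X 0 * X 1 ^ m, mem_gen' (k := k) m⟩).snd = Polynomial.X ^ m := by
      rw [show ψ₀ ⟨X 0 * X 1 ^ m, mem_gen' (k := k) m⟩ = ev (X 0 * X 1 ^ m) from rfl]
      rw [map_mul, map_pow, aeval_X, aeval_X, Matrix.cons_val_zero, Matrix.cons_val_one,
        Matrix.cons_val_zero, hinlpow]
      rw [snd_mul, DualNumber.fst_eps, snd_inl, fst_inl, DualNumber.snd_eps, smul_zero, zero_add]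
      show (1 : Polynomial k) * Polynomial.X ^ m = _
      rw [one_mul]
    exact h2 ▸ h1.2
  set n := Module.finrank k W with hn
  have base : LinearIndependent k (fun i : ℕ => (Polynomial.X : Polynomial k) ^ i) := by
    have hb := (Polynomial.basisMonomials k).linearIndependent
    rw [Polynomial.coe_basisMonomials] at hb
    convert hb using 2 with i
    rw [Polynomial.X_pow_eq_monomial]
  have comp := base.comp (Fin.val : Fin (n + 1) → ℕ) Fin.val_injective
  have hli : LinearIndependent k
      (fun i : Fin (n + 1) => (⟨Polynomial.X ^ (i : ℕ), hXm i⟩ : W)) := by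
    apply LinearIndependent.of_comp W.subtype
    convert comp with i
    rfl
  have hcard := hli.fintype_card_le_finrank
  rw [Fintype.card_fin] at hcard
  omega

end Aux

set_option maxHeartbeats 1600000 in
set_option synthInstance.maxHeartbeats 1000000 in
/-- The finite generation ideal of `R` equals `m₀ = x·k[x,y]`: for a nonzero `f ∈ R`,
the localization `R_f` is a finitely generated `k`-algebra if and only if `x` divides `f`
in `k[x,y]`; and moreover `m₀` is the radical of the principal ideal `x·R` of `R`. -/
theorem stmt_4 (k : Type*) [Field k] (x : Rxy k)
    (hx : (x : MvPolynomial (Fin 2) k) = X 0) :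
    (∀ f : Rxy k, f ≠ 0 →
      (Algebra.FiniteType k (Localization.Away f) ↔
        X 0 ∣ (f : MvPolynomial (Fin 2) k))) ∧
    (Ideal.span {x}).radical =
      Ideal.comap (Rxy k).val.toRingHom (Ideal.span {X 0}) := by
  constructor
  · intro f _
    constructor
    · intro hFT
      obtain ⟨c, g, hfg⟩ := mem_Rxy_iff'.mp f.2
      by_cases hc : c = 0
      · rw [hfg, hc, map_zero, zero_add]
        exact Dvd.intro g rfl
      · exact (dvd_of_ft f c g hfg hc hFT).elim
    · intro hdvd
      exact ft_of_dvd f hdvd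
  · exact radical_eq x hx
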